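/- arXiv:2103.15069 — 2 statements merged into one kernel-verified Lean document; each statement's English description precedes it below -/
import Mathlib

section
/- The gradient of the per-example clustering loss L_i = Σ_j p_{ij} log(p_{ij}/q_{ij}) with respect to the embedded point z_i equals 2 Σ_j (1+||z_i-μ_j||²)^{-1} (p_{ij} - q_{ij})(z_i - μ_j), where q_{ij} is the Student's t soft assignment. -/
noncomputable def studentQ {d K : ℕ} (μ : Fin K → EuclideanSpace ℝ (Fin d))
    (z : EuclideanSpace ℝ (Fin d)) (j : Fin K) : ℝ :=
  (1 + ‖z - μ j‖ ^ 2)⁻¹ / ∑ j' : Fin K, (1 + ‖z - μ j'‖ ^ 2)⁻¹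

set_option maxHeartbeats 2000000 in
theorem gradient_clustering_loss_wrt_z (d K : ℕ)
    (μ : Fin K → EuclideanSpace ℝ (Fin d))
    (p : Fin K → ℝ) (hp : ∀ j, 0 < p j) (hpsum : ∑ j, p j = 1)
    (z : EuclideanSpace ℝ (Fin d)) :
    HasGradientAt
      (fun x : EuclideanSpace ℝ (Fin d) =>
        ∑ j, p j * Real.log (p j / studentQ μ x j))
      (2 • ∑ j, ((1 + ‖z - μ j‖ ^ 2)⁻¹ * (p j - studentQ μ z j)) • (z - μ j))
      z := by
  classical
  -- positivity facts
  have hapos : ∀ (x : EuclideanSpace ℝ (Fin d)) (j : Fin K), (0:ℝ) < 1 + ‖x - μ j‖ ^ 2 := by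
    intro x j; positivity
  have haipos : ∀ (x : EuclideanSpace ℝ (Fin d)) (j : Fin K), (0:ℝ) < (1 + ‖x - μ j‖ ^ 2)⁻¹ := by
    intro x j; exact inv_pos.2 (hapos x j)
  have hK : Nonempty (Fin K) := by
    rcases Nat.eq_zero_or_pos K with h | h
    · subst h; simp at hpsum
    · exact ⟨⟨0, h⟩⟩
  have hSpos : ∀ x : EuclideanSpace ℝ (Fin d), (0:ℝ) < ∑ j' : Fin K, (1 + ‖x - μ j'‖ ^ 2)⁻¹ := by
    intro x
    exact Finset.sum_pos (fun j _ => haipos x j) Finset.univ_nonempty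
  -- rewrite the function
  have hfun : (fun x : EuclideanSpace ℝ (Fin d) => ∑ j, p j * Real.log (p j / studentQ μ x j))
      = fun x : EuclideanSpace ℝ (Fin d) =>
        (∑ j, p j * (Real.log (p j) - Real.log ((1 + ‖x - μ j‖ ^ 2)⁻¹)))
          + Real.log (∑ j' : Fin K, (1 + ‖x - μ j'‖ ^ 2)⁻¹) := by
    funext x
    have step : ∀ j : Fin K, p j * Real.log (p j / studentQ μ x j)
        = p j * (Real.log (p j) - Real.log ((1 + ‖x - μ j‖ ^ 2)⁻¹))
          + p j * Real.log (∑ j' : Fin K, (1 + ‖x - μ j'‖ ^ 2)⁻¹) := by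
      intro j
      rw [studentQ, Real.log_div (hp j).ne' (div_ne_zero (haipos x j).ne' (hSpos x).ne'),
        Real.log_div (haipos x j).ne' (hSpos x).ne']
      ring
    rw [Finset.sum_congr rfl (fun j _ => step j), Finset.sum_add_distrib,
      ← Finset.sum_mul, hpsum, one_mul]
  rw [hasGradientAt_iff_hasFDerivAt, hfun]
  -- derivatives of building blocks
  have hA : ∀ j : Fin K, HasFDerivAt (fun x : EuclideanSpace ℝ (Fin d) => (1 + ‖x - μ j‖ ^ 2)⁻¹)
      ((-((1 + ‖z - μ j‖ ^ 2) ^ 2)⁻¹) • (2 • innerSL ℝ (z - μ j))) z := by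
    intro j
    have hn : HasFDerivAt (fun x : EuclideanSpace ℝ (Fin d) => 1 + ‖x - μ j‖ ^ 2)
        (2 • innerSL ℝ (z - μ j)) z := by
      have := ((hasFDerivAt_id z).sub_const (μ j)).norm_sq
      simpa using this.const_add 1
    exact (hasDerivAt_inv (hapos z j).ne').comp_hasFDerivAt z hn
  have hterm1 : HasFDerivAt
      (fun x : EuclideanSpace ℝ (Fin d) => ∑ j, p j * (Real.log (p j) - Real.log ((1 + ‖x - μ j‖ ^ 2)⁻¹)))
      (∑ j, p j • ((0 : EuclideanSpace ℝ (Fin d) →L[ℝ] ℝ) -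
        ((1 + ‖z - μ j‖ ^ 2)⁻¹)⁻¹ • ((-((1 + ‖z - μ j‖ ^ 2) ^ 2)⁻¹) • (2 • innerSL ℝ (z - μ j)))))
      z := by
    refine HasFDerivAt.fun_sum fun j _ => ?_
    exact ((hasFDerivAt_const (Real.log (p j)) z).sub ((hA j).log (haipos z j).ne')).const_mul (p j)
  have hterm2 : HasFDerivAt
      (fun x : EuclideanSpace ℝ (Fin d) => Real.log (∑ j' : Fin K, (1 + ‖x - μ j'‖ ^ 2)⁻¹))
      ((∑ j' : Fin K, (1 + ‖z - μ j'‖ ^ 2)⁻¹)⁻¹ •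
        (∑ j, (-((1 + ‖z - μ j‖ ^ 2) ^ 2)⁻¹) • (2 • innerSL ℝ (z - μ j)))) z :=
    (HasFDerivAt.fun_sum fun j _ => hA j).log (hSpos z).ne'
  have htot := hterm1.add hterm2
  refine htot.congr_fderiv ?_
  symm
  -- show the linear maps agree
  ext y
  simp only [InnerProductSpace.toDual_apply_apply, ContinuousLinearMap.add_apply,
    ContinuousLinearMap.coe_sum', Finset.sum_apply, ContinuousLinearMap.coe_smul',
    Pi.smul_apply, ContinuousLinearMap.sub_apply, ContinuousLinearMap.zero_apply,
    innerSL_apply_apply, smul_eq_mul]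
  simp only [Finset.mul_sum]
  rw [two_smul, inner_add_left, sum_inner (𝕜 := ℝ), ← Finset.sum_add_distrib,
    ← Finset.sum_add_distrib]
  refine Finset.sum_congr rfl fun j _ => ?_
  rw [real_inner_smul_left]
  simp only [nsmul_eq_mul, Nat.cast_ofNat]
  have hS := (hSpos z).ne'
  have ha := (hapos z j).ne'
  rw [studentQ]
  field_simp
  ring
end

section
/- The gradient of the clustering loss L = Σ_i Σ_j p_{ij} log(p_{ij}/q_{ij}) with respect to centroid μ_j equals 2 Σ_i (1+||z_i-μ_j||²)^{-1} (q_{ij} - p_{ij})(z_i - μ_j). -/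
open RealInnerProductSpace

section gradlemmas
variable {E : Type*} [NormedAddCommGroup E] [InnerProductSpace ℝ E] [CompleteSpace E]

lemma myGrad.comp_scalar {f : E → ℝ} {g x : E} {φ : ℝ → ℝ} {φ' : ℝ}
    (hf : HasGradientAt f g x) (hφ : HasDerivAt φ φ' (f x)) :
    HasGradientAt (fun m => φ (f m)) (φ' • g) x := by
  rw [hasGradientAt_iff_hasFDerivAt] at hf ⊢
  have h := (hφ.hasFDerivAt).comp x hf
  refine h.congr_fderiv ?_
  ext v
  simp [InnerProductSpace.toDual_apply_apply, real_inner_smul_left]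
  ring

lemma myGrad.add {f₁ f₂ : E → ℝ} {g₁ g₂ : E} {x : E}
    (h₁ : HasGradientAt f₁ g₁ x) (h₂ : HasGradientAt f₂ g₂ x) :
    HasGradientAt (fun m => f₁ m + f₂ m) (g₁ + g₂) x := by
  rw [hasGradientAt_iff_hasFDerivAt] at *
  rw [map_add]; exact h₁.add h₂

lemma myGrad.sum {ι : Type*} (s : Finset ι) {f : ι → E → ℝ} {g : ι → E} {x : E}
    (h : ∀ i ∈ s, HasGradientAt (f i) (g i) x) :
    HasGradientAt (fun m => ∑ i ∈ s, f i m) (∑ i ∈ s, g i) x := by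
  simp only [hasGradientAt_iff_hasFDerivAt] at *
  rw [map_sum]; exact HasFDerivAt.fun_sum h

lemma myGrad.const_add {f : E → ℝ} {g x : E} (c : ℝ) (h : HasGradientAt f g x) :
    HasGradientAt (fun m => c + f m) g x := by
  simpa using myGrad.add (hasGradientAt_const x c) h

lemma myGrad.add_const {f : E → ℝ} {g x : E} (c : ℝ) (h : HasGradientAt f g x) :
    HasGradientAt (fun m => f m + c) g x := by
  simpa using myGrad.add h (hasGradientAt_const x c)

lemma myGrad.one_add_norm_sq (z x : E) :
    HasGradientAt (fun m : E => 1 + ‖z - m‖ ^ 2) ((-2 : ℝ) • (z - x)) x := by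
  have hfun : (fun m : E => 1 + ‖z - m‖ ^ 2) = fun m => 1 + ⟪z - m, z - m⟫ := by
    funext m; rw [real_inner_self_eq_norm_sq]
  rw [hfun, hasGradientAt_iff_hasFDerivAt]
  have h1 : HasFDerivAt (fun m : E => z - m) (-(ContinuousLinearMap.id ℝ E)) x := by
    simpa using (hasFDerivAt_id x).const_sub z
  have h2 := (HasFDerivAt.inner ℝ h1 h1).const_add 1
  refine h2.congr_fderiv ?_
  ext v
  simp [InnerProductSpace.toDual_apply_apply, fderivInnerCLM_apply, real_inner_smul_left,
    real_inner_comm (z - x) v, inner_sub_left]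
  ring

end gradlemmas

noncomputable def studentQ' {d K : ℕ} (μ : Fin K → EuclideanSpace ℝ (Fin d))
    (z : EuclideanSpace ℝ (Fin d)) (j : Fin K) : ℝ :=
  (1 + ‖z - μ j‖ ^ 2)⁻¹ / ∑ j' : Fin K, (1 + ‖z - μ j'‖ ^ 2)⁻¹

theorem gradient_clustering_loss_wrt_centroid (d K N : ℕ)
    (z : Fin N → EuclideanSpace ℝ (Fin d))
    (μ : Fin K → EuclideanSpace ℝ (Fin d))
    (p : Fin N → Fin K → ℝ) (hp : ∀ i j, 0 < p i j)
    (hpsum : ∀ i, ∑ j, p i j = 1) (j : Fin K) :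
    HasGradientAt
      (fun m : EuclideanSpace ℝ (Fin d) =>
        ∑ i, ∑ k, p i k * Real.log (p i k / studentQ' (Function.update μ j m) (z i) k))
      (2 • ∑ i, ((1 + ‖z i - μ j‖ ^ 2)⁻¹ * (studentQ' μ (z i) j - p i j)) • (z i - μ j))
      (μ j) := by
  classical
  set x := μ j with hx
  set G : Fin N → EuclideanSpace ℝ (Fin d) → ℝ := fun i m => 1 + ‖z i - m‖ ^ 2 with hGdef
  have hGpos : ∀ i m, 0 < G i m := fun i m => by positivity
  set c : Fin N → ℝ := fun i => ∑ k ∈ Finset.univ.erase j, (1 + ‖z i - μ k‖ ^ 2)⁻¹ with hcdef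
  have hcnn : ∀ i, 0 ≤ c i := fun i => Finset.sum_nonneg fun k _ => by positivity
  set S : Fin N → EuclideanSpace ℝ (Fin d) → ℝ := fun i m => (G i m)⁻¹ + c i with hSdef
  have hSpos : ∀ i m, 0 < S i m := fun i m =>
    add_pos_of_pos_of_nonneg (inv_pos.2 (hGpos i m)) (hcnn i)
  -- the sum over k of the kernels equals S
  have hsum : ∀ i (m : EuclideanSpace ℝ (Fin d)),
      (∑ k, (1 + ‖z i - Function.update μ j m k‖ ^ 2)⁻¹) = S i m := by
    intro i m
    rw [← Finset.sum_erase_add _ _ (Finset.mem_univ j), Function.update_self]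
    rw [hSdef]
    simp only [add_comm]
    congr 1
    · exact Finset.sum_congr rfl fun k hk => by
        rw [Function.update_of_ne (Finset.mem_erase.1 hk).1]
  set D : Fin N → ℝ := fun i => (∑ k, p i k * Real.log (p i k)) -
      ∑ k ∈ Finset.univ.erase j, p i k * Real.log ((1 + ‖z i - μ k‖ ^ 2)⁻¹) with hDdef
  -- rewrite of the loss function
  have hfun : (fun m : EuclideanSpace ℝ (Fin d) =>
        ∑ i, ∑ k, p i k * Real.log (p i k / studentQ' (Function.update μ j m) (z i) k))
      = fun m => (∑ i, D i) + ∑ i, (p i j * Real.log (G i m) + Real.log (S i m)) := by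
    funext m
    rw [← Finset.sum_add_distrib]
    refine Finset.sum_congr rfl fun i _ => ?_
    have hfk : ∀ k, (0:ℝ) < (1 + ‖z i - Function.update μ j m k‖ ^ 2)⁻¹ :=
      fun k => by positivity
    have hS := hSpos i m
    have hstep : ∀ k ∈ Finset.univ,
        p i k * Real.log (p i k / studentQ' (Function.update μ j m) (z i) k)
        = p i k * Real.log (p i k)
          - p i k * Real.log ((1 + ‖z i - Function.update μ j m k‖ ^ 2)⁻¹)
          + p i k * Real.log (S i m) := by
      intro k _
      rw [studentQ', hsum i m,
        Real.log_div (hp i k).ne' (div_pos (hfk k) hS).ne',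
        Real.log_div (hfk k).ne' hS.ne']
      ring
    have hsplit : ∑ k, p i k * Real.log ((1 + ‖z i - Function.update μ j m k‖ ^ 2)⁻¹)
        = (∑ k ∈ Finset.univ.erase j, p i k * Real.log ((1 + ‖z i - μ k‖ ^ 2)⁻¹))
          + p i j * Real.log ((G i m)⁻¹) := by
      rw [← Finset.sum_erase_add _ _ (Finset.mem_univ j), Function.update_self]
      congr 1
      exact Finset.sum_congr rfl fun k hk => by
        rw [Function.update_of_ne (Finset.mem_erase.1 hk).1]
    rw [Finset.sum_congr rfl hstep, Finset.sum_add_distrib, Finset.sum_sub_distrib,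
      ← Finset.sum_mul, hpsum i, one_mul, hsplit, Real.log_inv]
    simp only [hDdef]
    ring
  rw [hfun]
  -- gradients of the pieces
  have hmain : HasGradientAt
      (fun m : EuclideanSpace ℝ (Fin d) =>
        (∑ i, D i) + ∑ i, (p i j * Real.log (G i m) + Real.log (S i m)))
      (∑ i, (p i j • ((G i x)⁻¹ • ((-2 : ℝ) • (z i - x))) +
        (S i x)⁻¹ • ((-(G i x ^ 2)⁻¹) • ((-2 : ℝ) • (z i - x))))) x := by
    refine myGrad.const_add _ (myGrad.sum _ fun i _ => ?_)
    have h1 : HasGradientAt (G i) ((-2 : ℝ) • (z i - x)) x := myGrad.one_add_norm_sq (z i) x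
    have h2 : HasGradientAt (fun m => Real.log (G i m))
        ((G i x)⁻¹ • ((-2 : ℝ) • (z i - x))) x :=
      myGrad.comp_scalar h1 (Real.hasDerivAt_log (hGpos i x).ne')
    have hder : HasDerivAt (fun t : ℝ => p i j * t) (p i j) (Real.log (G i x)) := by
      simpa using (hasDerivAt_id (Real.log (G i x))).const_mul (p i j)
    have h3 : HasGradientAt (fun m => p i j * Real.log (G i m))
        (p i j • ((G i x)⁻¹ • ((-2 : ℝ) • (z i - x)))) x := myGrad.comp_scalar h2 hder
    have h4 : HasGradientAt (fun m => (G i m)⁻¹)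
        ((-(G i x ^ 2)⁻¹) • ((-2 : ℝ) • (z i - x))) x :=
      myGrad.comp_scalar h1 (hasDerivAt_inv (hGpos i x).ne')
    have h5 : HasGradientAt (S i) ((-(G i x ^ 2)⁻¹) • ((-2 : ℝ) • (z i - x))) x :=
      myGrad.add_const (c i) h4
    have h6 : HasGradientAt (fun m => Real.log (S i m))
        ((S i x)⁻¹ • ((-(G i x ^ 2)⁻¹) • ((-2 : ℝ) • (z i - x)))) x :=
      myGrad.comp_scalar h5 (Real.hasDerivAt_log (hSpos i x).ne')
    exact myGrad.add h3 h6
  -- identify the gradient vector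
  have hq : ∀ i, studentQ' μ (z i) j = (G i x)⁻¹ / S i x := by
    intro i
    have := hsum i x
    rw [Function.update_eq_self] at this
    rw [studentQ', this]
  have hgrad : (∑ i, (p i j • ((G i x)⁻¹ • ((-2 : ℝ) • (z i - x))) +
        (S i x)⁻¹ • ((-(G i x ^ 2)⁻¹) • ((-2 : ℝ) • (z i - x)))))
      = 2 • ∑ i, ((1 + ‖z i - μ j‖ ^ 2)⁻¹ * (studentQ' μ (z i) j - p i j)) • (z i - μ j) := by
    rw [← Nat.cast_smul_eq_nsmul ℝ, Finset.smul_sum]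
    refine Finset.sum_congr rfl fun i _ => ?_
    simp only [smul_smul, ← hx]
    rw [← add_smul]
    congr 1
    rw [hq i]
    have h1 := (hGpos i x).ne'
    have h2 := (hSpos i x).ne'
    simp only [hGdef, hSdef, hcdef, Nat.cast_ofNat] at h1 h2 ⊢
    generalize hC : (∑ k ∈ Finset.univ.erase j, (1 + ‖z i - μ k‖ ^ 2)⁻¹) = C at h2 ⊢
    generalize hA : (1 + ‖z i - x‖ ^ 2) = A at h1 h2 ⊢
    ring
  rw [← hgrad]
  exact hmain
end
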